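/- Fix x ∈ ℝ and ρ ∈ (−1,1), and for r ∈ (−1,1) let f(r, y) = (2π(1−r²))^{−1/2} · exp( −(y − r x)² / (2(1−r²)) ) be the density of the normal distribution N(r x, 1−r²) at y. Then the Fisher information of ρ from this family satisfies ∫_ℝ ( ∂/∂r [ ln f(r, y) ] |_{r=ρ} )² · f(ρ, y) dy = ( (1 − ρ²)·x² + 2ρ² ) / (1 − ρ²)². -/

import Mathlib

set_option autoImplicit false

open MeasureTheory

/-- The conditional density of `Y` given `X = x` in the bivariate normal model
`Y = rX + √(1-r²)Z`: the density of `N(rx, 1-r²)` at `y`. -/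
noncomputable def condDensity (x r y : ℝ) : ℝ :=
  Real.exp (-(y - r * x) ^ 2 / (2 * (1 - r ^ 2))) / Real.sqrt (2 * Real.pi * (1 - r ^ 2))

open Real

lemma integrable_pow_mul_gauss {b : ℝ} (hb : 0 < b) (n : ℕ) :
    Integrable fun z : ℝ => z ^ n * Real.exp (-b * z ^ 2) := by
  have h : (-1 : ℝ) < n := by exact lt_of_lt_of_le (by norm_num) (Nat.cast_nonneg n)
  have := integrable_rpow_mul_exp_neg_mul_sq hb h
  simpa [Real.rpow_natCast] using this

lemma gauss_ibp {b : ℝ} (hb : 0 < b) (k : ℕ) :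
    ∫ z : ℝ, (((k:ℝ)+1) * z ^ k - 2*b*z^(k+2)) * Real.exp (-b * z^2) = 0 := by
  apply integral_eq_zero_of_hasDerivAt_of_integrable
    (f := fun z => z^(k+1) * Real.exp (-b*z^2))
  · intro z
    have h1 : HasDerivAt (fun z : ℝ => z^(k+1)) (((k:ℝ)+1) * z^k) z := by
      simpa using hasDerivAt_pow (k+1) z
    have h2 : HasDerivAt (fun z : ℝ => Real.exp (-b*z^2)) (Real.exp (-b*z^2) * (-b*(2*z))) z := by
      have h3 : HasDerivAt (fun z : ℝ => -b*z^2) (-b*(2*z)) z := by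
        simpa using (hasDerivAt_pow 2 z).const_mul (-b)
      exact h3.exp
    refine (h1.fun_mul h2).congr_deriv ?_
    ring
  · have hA := (integrable_pow_mul_gauss hb k).const_mul ((k:ℝ)+1)
    have hB := (integrable_pow_mul_gauss hb (k+2)).const_mul (2*b)
    apply (hA.sub hB).congr
    filter_upwards with z
    simp only [Pi.sub_apply]
    ring
  · exact integrable_pow_mul_gauss hb (k+1)

lemma gauss_F1 {b : ℝ} (hb : 0 < b) : ∫ z : ℝ, z * Real.exp (-b * z^2) = 0 := by
  apply integral_eq_zero_of_hasDerivAt_of_integrable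
    (f := fun z => -(1/(2*b)) * Real.exp (-b*z^2))
  · intro z
    have h3 : HasDerivAt (fun z : ℝ => -b*z^2) (-b*(2*z)) z := by
      simpa using (hasDerivAt_pow 2 z).const_mul (-b)
    have := h3.exp.const_mul (-(1/(2*b)))
    refine this.congr_deriv ?_
    field_simp
  · simpa using integrable_pow_mul_gauss hb 1
  · exact (integrable_exp_neg_mul_sq hb).const_mul _

lemma gauss_F2 {b : ℝ} (hb : 0 < b) :
    ∫ z : ℝ, z^2 * Real.exp (-b * z^2) = Real.sqrt (π/b) / (2*b) := by
  have h := gauss_ibp hb 0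
  have hsub : ∫ z : ℝ, ((((0:ℕ):ℝ)+1) * z ^ 0 - 2*b*z^(0+2)) * Real.exp (-b * z^2)
      = (∫ z : ℝ, Real.exp (-b*z^2)) - 2*b * ∫ z : ℝ, z^2 * Real.exp (-b*z^2) := by
    rw [← integral_const_mul, ← integral_sub (integrable_exp_neg_mul_sq hb)
      ((integrable_pow_mul_gauss hb 2).const_mul _)]
    congr 1 with z
    ring
  rw [hsub, integral_gaussian] at h
  field_simp at h ⊢
  linarith

lemma gauss_F3 {b : ℝ} (hb : 0 < b) : ∫ z : ℝ, z^3 * Real.exp (-b * z^2) = 0 := by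
  have h := gauss_ibp hb 1
  have hsub : ∫ z : ℝ, ((((1:ℕ):ℝ)+1) * z ^ 1 - 2*b*z^(1+2)) * Real.exp (-b * z^2)
      = 2 * (∫ z : ℝ, z * Real.exp (-b*z^2)) - 2*b * ∫ z : ℝ, z^3 * Real.exp (-b*z^2) := by
    rw [← integral_const_mul, ← integral_const_mul, ← integral_sub
      (((integrable_pow_mul_gauss hb 1).const_mul 2).congr ?_)
      ((integrable_pow_mul_gauss hb 3).const_mul _)]
    · congr 1 with z; ring
    · filter_upwards with z; ring
  rw [hsub, gauss_F1 hb] at h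
  have hb' : (2*b) ≠ 0 := by positivity
  have h2 : 2*b * ∫ z : ℝ, z^3 * Real.exp (-b*z^2) = 0 := by linarith
  exact (mul_eq_zero.mp h2).resolve_left hb'

lemma gauss_F4 {b : ℝ} (hb : 0 < b) :
    ∫ z : ℝ, z^4 * Real.exp (-b * z^2) = 3 * Real.sqrt (π/b) / (4*b^2) := by
  have h := gauss_ibp hb 2
  have hsub : ∫ z : ℝ, ((((2:ℕ):ℝ)+1) * z ^ 2 - 2*b*z^(2+2)) * Real.exp (-b * z^2)
      = 3 * (∫ z : ℝ, z^2 * Real.exp (-b*z^2)) - 2*b * ∫ z : ℝ, z^4 * Real.exp (-b*z^2) := by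
    rw [← integral_const_mul, ← integral_const_mul, ← integral_sub
      ((integrable_pow_mul_gauss hb 2).const_mul 3)
      ((integrable_pow_mul_gauss hb 4).const_mul _)]
    congr 1 with z; ring
  rw [hsub, gauss_F2 hb] at h
  have hb' : b ≠ 0 := ne_of_gt hb
  field_simp at h ⊢
  linarith

lemma integral_poly_gauss {b : ℝ} (hb : 0 < b) (c0 c1 c2 c3 c4 : ℝ) :
    ∫ z : ℝ, (c0 + c1*z + c2*z^2 + c3*z^3 + c4*z^4) * Real.exp (-b*z^2)
      = c0 * Real.sqrt (π/b) + c2 * (Real.sqrt (π/b)/(2*b)) + c4 * (3*Real.sqrt (π/b)/(4*b^2)) := by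
  have h0 := integrable_exp_neg_mul_sq hb
  have h1 := integrable_pow_mul_gauss hb 1
  have h2 := integrable_pow_mul_gauss hb 2
  have h3 := integrable_pow_mul_gauss hb 3
  have h4 := integrable_pow_mul_gauss hb 4
  have hfe : (fun z : ℝ => (c0 + c1*z + c2*z^2 + c3*z^3 + c4*z^4) * Real.exp (-b*z^2))
      = fun z : ℝ => c0 * Real.exp (-b*z^2) + (c1 * (z^1 * Real.exp (-b*z^2))
        + (c2 * (z^2 * Real.exp (-b*z^2)) + (c3 * (z^3 * Real.exp (-b*z^2))
        + c4 * (z^4 * Real.exp (-b*z^2))))) := funext fun z => by ring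
  have h34 : Integrable (fun z : ℝ => c3 * (z^3 * Real.exp (-b*z^2))
      + c4 * (z^4 * Real.exp (-b*z^2))) volume := (h3.const_mul c3).add (h4.const_mul c4)
  have h234 : Integrable (fun z : ℝ => c2 * (z^2 * Real.exp (-b*z^2))
      + (c3 * (z^3 * Real.exp (-b*z^2)) + c4 * (z^4 * Real.exp (-b*z^2)))) volume :=
    (h2.const_mul c2).add h34
  have h1234 : Integrable (fun z : ℝ => c1 * (z^1 * Real.exp (-b*z^2))
      + (c2 * (z^2 * Real.exp (-b*z^2)) + (c3 * (z^3 * Real.exp (-b*z^2))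
      + c4 * (z^4 * Real.exp (-b*z^2))))) volume := (h1.const_mul c1).add h234
  rw [hfe, integral_add (h0.const_mul c0) h1234,
    integral_add (h1.const_mul c1) h234,
    integral_add (h2.const_mul c2) h34,
    integral_add (h3.const_mul c3) (h4.const_mul c4),
    integral_const_mul, integral_const_mul, integral_const_mul, integral_const_mul, integral_const_mul,
    integral_gaussian]
  have hF1 : ∫ z : ℝ, z^1 * Real.exp (-b*z^2) = 0 := by simpa using gauss_F1 hb
  rw [hF1, gauss_F2 hb, gauss_F3 hb, gauss_F4 hb]
  ring

lemma deriv_log_condDensity (x ρ y : ℝ) (hρ₁ : -1 < ρ) (hρ₂ : ρ < 1) :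
    deriv (fun r => Real.log (condDensity x r y)) ρ
      = x*(y-ρ*x)/(1-ρ^2) + ρ*((1-ρ^2) - (y-ρ*x)^2)/(1-ρ^2)^2 := by
  have hs : 0 < 1 - ρ^2 := by nlinarith
  have hπ := Real.pi_pos
  have hev : (fun r => Real.log (condDensity x r y)) =ᶠ[nhds ρ]
      (fun r : ℝ => -(y - r*x)^2/(2*(1-r^2)) - (1/2) * Real.log (2*Real.pi*(1-r^2))) := by
    filter_upwards [Ioo_mem_nhds hρ₁ hρ₂] with r hr
    have h2 : 0 < 1 - r^2 := by nlinarith [hr.1, hr.2]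
    have hpos : 0 < 2*Real.pi*(1-r^2) := by positivity
    simp only [condDensity]
    rw [Real.log_div (Real.exp_ne_zero _) (Real.sqrt_ne_zero'.mpr hpos),
      Real.log_exp, Real.log_sqrt hpos.le]
    ring
  rw [hev.deriv_eq]
  have hA : HasDerivAt (fun r : ℝ => y - r*x) (-x) ρ := by
    simpa using ((hasDerivAt_id ρ).mul_const x).const_sub y
  have hC : HasDerivAt (fun r : ℝ => -(y - r*x)^2) (-(2*(y-ρ*x)^1*(-x))) ρ := (hA.pow 2).neg
  have hD : HasDerivAt (fun r : ℝ => 2*(1-r^2)) (2*(-(2*ρ^1))) ρ := by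
    simpa using (((hasDerivAt_pow 2 ρ).const_sub 1).const_mul 2)
  have hden : (2*(1-ρ^2)) ≠ 0 := by positivity
  have hQ := hC.div hD hden
  have hIn : HasDerivAt (fun r : ℝ => 2*Real.pi*(1-r^2)) (2*Real.pi*(-(2*ρ^1))) ρ := by
    simpa using (((hasDerivAt_pow 2 ρ).const_sub 1).const_mul (2*Real.pi))
  have hpos' : (2*Real.pi*(1-ρ^2)) ≠ 0 := by positivity
  have hHalf := (hIn.log hpos').const_mul (1/2)
  have hG := hQ.sub hHalf
  have hG' : HasDerivAt (fun r : ℝ => -(y - r*x)^2/(2*(1-r^2)) - (1/2) * Real.log (2*Real.pi*(1-r^2))) _ ρ := hG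
  rw [hG'.deriv]
  field_simp
  ring

/-- the Fisher information of `ρ` from `Y | X = x` equals
`((1-ρ²) x² + 2ρ²) / (1-ρ²)²`. -/
theorem stmt18 (x ρ : ℝ) (hρ₁ : -1 < ρ) (hρ₂ : ρ < 1) :
    (∫ y, (deriv (fun r => Real.log (condDensity x r y)) ρ) ^ 2 * condDensity x ρ y)
      = ((1 - ρ ^ 2) * x ^ 2 + 2 * ρ ^ 2) / (1 - ρ ^ 2) ^ 2 := by
  have hs : 0 < 1 - ρ^2 := by nlinarith
  have hπ := Real.pi_pos
  set s : ℝ := 1 - ρ^2 with hsdef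
  set R : ℝ := Real.sqrt (2*Real.pi*s) with hRdef
  have hRpos : 0 < R := Real.sqrt_pos.mpr (by positivity)
  set b : ℝ := (2*s)⁻¹ with hbdef
  have hb : 0 < b := by positivity
  set d0 : ℝ := ρ^2/s^2/R with hd0
  set d1 : ℝ := 2*x*ρ/s^2/R with hd1
  set d2 : ℝ := (x^2/s^2 - 2*ρ^2/s^3)/R with hd2
  set d3 : ℝ := (-(2*x*ρ))/s^3/R with hd3
  set d4 : ℝ := ρ^2/s^4/R with hd4
  have key : (fun y => (deriv (fun r => Real.log (condDensity x r y)) ρ) ^ 2 * condDensity x ρ y)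
      = fun y => (fun z : ℝ => (d0 + d1*z + d2*z^2 + d3*z^3 + d4*z^4) * Real.exp (-b*z^2)) (y - ρ*x) := by
    funext y
    rw [deriv_log_condDensity x ρ y hρ₁ hρ₂]
    simp only [condDensity, ← hsdef]
    rw [show -(y - ρ*x)^2/(2*s) = -b*(y-ρ*x)^2 by rw [hbdef]; field_simp]
    rw [hd0, hd1, hd2, hd3, hd4, ← hRdef]
    have hsne : s ≠ 0 := ne_of_gt hs
    field_simp
    ring
  rw [key, integral_sub_right_eq_self
    (fun z : ℝ => (d0 + d1*z + d2*z^2 + d3*z^3 + d4*z^4) * Real.exp (-b*z^2)) (ρ*x),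
    integral_poly_gauss hb]
  have hRR : Real.sqrt (π / b) = R := by
    rw [hRdef, show π/b = 2*Real.pi*s by rw [hbdef]; field_simp]
  rw [hRR, hd0, hd2, hd4, hbdef]
  have hsne : s ≠ 0 := ne_of_gt hs
  have hRne : R ≠ 0 := ne_of_gt hRpos
  field_simp
  ring
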